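/- Let d ≥ 1, let U ⊆ ℝ^d be open, and let i : U → ℝ^{d+2} be a map of class C¹ with q(i(p)) = −1 for all p ∈ U. Equip U with the Euclidean distance. Then i is a spacelike immersion if and only if the pullback of the metric is positive definite at every point, i.e. for every p ∈ U and every v ∈ ℝ^d with v ≠ 0 one has ⟨Di_p(v), Di_p(v)⟩ > 0. -/

import Mathlib

noncomputable section

/-- The coefficient of the signature-(d,2) quadratic form: +1 on the first `d`
coordinates, −1 on the last two. -/
def eps (d : ℕ) (i : Fin (d + 2)) : ℝ := if (i : ℕ) < d then 1 else -1

/-- The bilinear form ⟨·,·⟩ of signature (d,2) on ℝ^{d+2}. -/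
def bil (d : ℕ) (x y : EuclideanSpace ℝ (Fin (d + 2))) : ℝ := ∑ i, eps d i * x i * y i

/-- The quadratic form q of signature (d,2). -/
def quad (d : ℕ) (x : EuclideanSpace ℝ (Fin (d + 2))) : ℝ := bil d x x
/-- A spacelike immersion from a metric space into AdS^{d+1} = {q = −1}:
a locally Lipschitz map such that, locally, ⟨i(p), i(p')⟩ ≤ −1 − c·d(p,p')². -/
def IsSpacelikeImmersion {H : Type*} [MetricSpace H] (d : ℕ)
    (i : H → EuclideanSpace ℝ (Fin (d + 2))) : Prop :=
  LocallyLipschitz i ∧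
  ∀ p : H, ∃ U ∈ nhds p, ∃ c : ℝ, 0 < c ∧
    ∀ p' ∈ U, ∀ p'' ∈ U, bil d (i p') (i p'') ≤ -1 - c * dist p' p'' ^ 2

open Filter Metric Topology RealInnerProductSpace in
lemma aux_abs_eps (d : ℕ) (i : Fin (d+2)) : |eps d i| = 1 := by
  unfold eps; split <;> simp

lemma aux_quad_sub (d : ℕ) (x y : EuclideanSpace ℝ (Fin (d + 2))) :
    quad d (x - y) = quad d x - 2 * bil d x y + quad d y := by
  unfold quad bil
  rw [Finset.mul_sum, ← Finset.sum_sub_distrib, ← Finset.sum_add_distrib]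
  refine Finset.sum_congr rfl fun i _ => ?_
  have hx : (x - y) i = x i - y i := rfl
  rw [hx]; ring

lemma aux_quad_add (d : ℕ) (x y : EuclideanSpace ℝ (Fin (d + 2))) :
    quad d (x + y) = quad d x + 2 * bil d x y + quad d y := by
  unfold quad bil
  rw [Finset.mul_sum, ← Finset.sum_add_distrib, ← Finset.sum_add_distrib]
  refine Finset.sum_congr rfl fun i _ => ?_
  have hx : (x + y) i = x i + y i := rfl
  rw [hx]; ring

lemma aux_quad_smul (d : ℕ) (c : ℝ) (x : EuclideanSpace ℝ (Fin (d + 2))) :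
    quad d (c • x) = c ^ 2 * quad d x := by
  unfold quad bil
  rw [Finset.mul_sum]
  refine Finset.sum_congr rfl fun i _ => ?_
  have hx : (c • x) i = c * x i := rfl
  rw [hx]; ring

open RealInnerProductSpace in
lemma aux_abs_bil_le (d : ℕ) (x y : EuclideanSpace ℝ (Fin (d + 2))) :
    |bil d x y| ≤ ‖x‖ * ‖y‖ := by
  set a : EuclideanSpace ℝ (Fin (d + 2)) := (WithLp.equiv 2 _).symm fun i => |x i|
  set b : EuclideanSpace ℝ (Fin (d + 2)) := (WithLp.equiv 2 _).symm fun i => |y i|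
  have ha : ∀ i, a i = |x i| := fun i => rfl
  have hb : ∀ i, b i = |y i| := fun i => rfl
  have hna : ‖a‖ = ‖x‖ := by
    rw [EuclideanSpace.norm_eq, EuclideanSpace.norm_eq]
    congr 1; refine Finset.sum_congr rfl fun i _ => ?_
    rw [ha]; simp [Real.norm_eq_abs, abs_abs]
  have hnb : ‖b‖ = ‖y‖ := by
    rw [EuclideanSpace.norm_eq, EuclideanSpace.norm_eq]
    congr 1; refine Finset.sum_congr rfl fun i _ => ?_
    rw [hb]; simp [Real.norm_eq_abs, abs_abs]
  have hinner : ⟪a, b⟫ = ∑ i, |x i| * |y i| := by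
    rw [PiLp.inner_apply]
    refine Finset.sum_congr rfl fun i _ => ?_
    rw [RCLike.inner_apply, ha, hb]; simp; ring
  calc |bil d x y| ≤ ∑ i, |eps d i * x i * y i| := Finset.abs_sum_le_sum_abs _ _
    _ = ∑ i, |x i| * |y i| := by
        refine Finset.sum_congr rfl fun i _ => ?_
        rw [abs_mul, abs_mul, aux_abs_eps]; ring
    _ = ⟪a, b⟫ := hinner.symm
    _ ≤ ‖a‖ * ‖b‖ := real_inner_le_norm a b
    _ = ‖x‖ * ‖y‖ := by rw [hna, hnb]

lemma aux_continuous_quad (d : ℕ) : Continuous (quad d) := by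
  unfold quad bil
  exact continuous_finset_sum _ fun i _ =>
    (continuous_const.mul (EuclideanSpace.proj i).continuous).mul
      (EuclideanSpace.proj i).continuous

lemma aux_quad_zero (d : ℕ) : quad d 0 = 0 := by
  unfold quad bil
  refine Finset.sum_eq_zero fun i _ => ?_
  have : (0 : EuclideanSpace ℝ (Fin (d+2))) i = 0 := rfl
  rw [this]; ring

open Filter Metric Topology in
set_option maxHeartbeats 1000000 in
/-- a C¹ map i : U → AdS^{d+1} on an open set U ⊆ ℝ^d (with the
Euclidean distance) is a spacelike immersion iff the pullback metric
⟨Di_p(v), Di_p(v)⟩ is positive definite at every point. -/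
theorem C1_spacelike_iff_pullback_positive (d : ℕ) (hd : 1 ≤ d)
    (U : Set (EuclideanSpace ℝ (Fin d))) (hUopen : IsOpen U)
    (i : EuclideanSpace ℝ (Fin d) → EuclideanSpace ℝ (Fin (d + 2)))
    (hC1 : ContDiffOn ℝ 1 i U)
    (hAdS : ∀ p ∈ U, quad d (i p) = -1) :
    IsSpacelikeImmersion d (fun p : U => i p) ↔
      ∀ p ∈ U, ∀ v : EuclideanSpace ℝ (Fin d), v ≠ 0 →
        0 < bil d (fderiv ℝ i p v) (fderiv ℝ i p v) := by
  constructor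
  · -- forward direction
    intro hsi p hp v hv
    obtain ⟨V, hV, c, hc, hest⟩ := hsi.2 ⟨p, hp⟩
    rw [nhds_subtype_eq_comap, mem_comap] at hV
    obtain ⟨W, hW, hWV⟩ := hV
    obtain ⟨r, hr, hball⟩ := Metric.mem_nhds_iff.1 (Filter.inter_mem hW (hUopen.mem_nhds hp))
    have hA : HasFDerivAt i (fderiv ℝ i p) p :=
      ((hC1.contDiffAt (hUopen.mem_nhds hp)).differentiableAt one_ne_zero).hasFDerivAt
    set A := fderiv ℝ i p with hAdef
    have hcnorm : Tendsto (fun n : ℕ => ‖(n : ℝ) + 1‖) atTop atTop := by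
      have h1 : Tendsto (fun n : ℕ => (n : ℝ) + 1) atTop atTop :=
        tendsto_atTop_add_const_right _ 1 tendsto_natCast_atTop_atTop
      refine h1.congr fun n => ?_
      rw [Real.norm_eq_abs, abs_of_pos (by positivity)]
    have hlim := hA.lim v (c := fun n : ℕ => (n : ℝ) + 1) hcnorm
    have hql : Tendsto (fun n : ℕ => quad d (((n : ℝ) + 1) • (i (p + ((n : ℝ) + 1)⁻¹ • v) - i p)))
        atTop (𝓝 (quad d (A v))) := ((aux_continuous_quad d).tendsto _).comp hlim
    have hsmall : ∀ᶠ n : ℕ in atTop, ((n : ℝ) + 1)⁻¹ * ‖v‖ < r := by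
      have h0 : Tendsto (fun n : ℕ => ((n : ℝ) + 1)⁻¹ * ‖v‖) atTop (𝓝 (0 * ‖v‖)) := by
        refine Tendsto.mul_const _ ?_
        have := tendsto_one_div_add_atTop_nhds_zero_nat (𝕜 := ℝ)
        simpa [one_div] using this
      rw [zero_mul] at h0
      exact h0.eventually_lt_const hr
    have hbound : ∀ᶠ n : ℕ in atTop,
        2 * c * ‖v‖ ^ 2 ≤ quad d (((n : ℝ) + 1) • (i (p + ((n : ℝ) + 1)⁻¹ • v) - i p)) := by
      filter_upwards [hsmall] with n hn
      set t := ((n : ℝ) + 1)⁻¹ with htdef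
      have htpos : (0 : ℝ) < t := by positivity
      set x := p + t • v with hxdef
      have hxp : x - p = t • v := add_sub_cancel_left p (t • v)
      have hdist : dist x p < r := by
        rw [dist_eq_norm, hxp, norm_smul, Real.norm_eq_abs, abs_of_pos htpos]
        exact hn
      have hxWU : x ∈ W ∩ U := hball hdist
      have hpW : p ∈ W := mem_of_mem_nhds hW
      have hxV : (⟨x, hxWU.2⟩ : U) ∈ V := hWV hxWU.1
      have hpV : (⟨p, hp⟩ : U) ∈ V := hWV hpW
      have hb := hest ⟨x, hxWU.2⟩ hxV ⟨p, hp⟩ hpV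
      have hdeq : dist (⟨x, hxWU.2⟩ : U) (⟨p, hp⟩ : U) = t * ‖v‖ := by
        rw [Subtype.dist_eq, dist_eq_norm]
        simp only [hxp]
        rw [norm_smul, Real.norm_eq_abs, abs_of_pos htpos]
      rw [hdeq] at hb
      have hq : 2 * c * (t * ‖v‖) ^ 2 ≤ quad d (i x - i p) := by
        have := aux_quad_sub d (i x) (i p)
        rw [hAdS x hxWU.2, hAdS p hp] at this
        nlinarith [hb]
      have hone : ((n : ℝ) + 1) * t = 1 := mul_inv_cancel₀ (by positivity)
      calc 2 * c * ‖v‖ ^ 2 = (((n : ℝ) + 1) * t) ^ 2 * (2 * c * ‖v‖ ^ 2) := by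
            rw [hone]; ring
        _ = ((n : ℝ) + 1) ^ 2 * (2 * c * (t * ‖v‖) ^ 2) := by ring
        _ ≤ ((n : ℝ) + 1) ^ 2 * quad d (i x - i p) := by
            refine mul_le_mul_of_nonneg_left hq (by positivity)
        _ = quad d (((n : ℝ) + 1) • (i (p + t • v) - i p)) := by
            rw [aux_quad_smul]
    have hfinal : 2 * c * ‖v‖ ^ 2 ≤ quad d (A v) := ge_of_tendsto hql hbound
    have hlt : 0 < 2 * c * ‖v‖ ^ 2 := by
      have := norm_pos_iff.2 hv
      positivity
    calc (0:ℝ) < 2 * c * ‖v‖ ^ 2 := hlt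
      _ ≤ quad d (A v) := hfinal
  · -- backward direction
    intro hpos
    constructor
    · -- locally Lipschitz
      intro p
      obtain ⟨K, t, ht, hlip⟩ :=
        (hC1.contDiffAt (hUopen.mem_nhds p.2)).exists_lipschitzOnWith
      refine ⟨K, Subtype.val ⁻¹' t,
        continuous_subtype_val.continuousAt.preimage_mem_nhds ht, ?_⟩
      intro a ha b hb
      rw [Subtype.edist_eq]
      exact hlip ha hb
    · -- local estimate
      intro p₀
      set A := fderiv ℝ i (p₀ : EuclideanSpace ℝ (Fin d)) with hAdef
      set M := ‖A‖ with hMdef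
      have hM0 : 0 ≤ M := norm_nonneg _
      have hsph_ne : (sphere (0 : EuclideanSpace ℝ (Fin d)) 1).Nonempty := by
        refine ⟨EuclideanSpace.single ⟨0, hd⟩ (1 : ℝ), ?_⟩
        rw [mem_sphere_zero_iff_norm, EuclideanSpace.norm_single]; norm_num
      obtain ⟨v₀, hv₀mem, hv₀min⟩ :=
        (isCompact_sphere (0 : EuclideanSpace ℝ (Fin d)) 1).exists_isMinOn
          hsph_ne (((aux_continuous_quad d).comp A.continuous).continuousOn)
      set c₀ := quad d (A v₀) with hc₀def
      have hv₀ : v₀ ≠ 0 := by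
        intro h
        have := mem_sphere_zero_iff_norm.1 hv₀mem
        rw [h, norm_zero] at this; norm_num at this
      have hc₀pos : 0 < c₀ := hpos _ p₀.2 v₀ hv₀
      have hcoer : ∀ v : EuclideanSpace ℝ (Fin d), c₀ * ‖v‖ ^ 2 ≤ quad d (A v) := by
        intro v
        rcases eq_or_ne v 0 with rfl | hv
        · simp [map_zero, aux_quad_zero]
        · have hnv : (0:ℝ) < ‖v‖ := norm_pos_iff.2 hv
          set u := ‖v‖⁻¹ • v with hudef
          have hu : u ∈ sphere (0 : EuclideanSpace ℝ (Fin d)) 1 := by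
            rw [mem_sphere_zero_iff_norm, norm_smul, Real.norm_eq_abs,
              abs_of_pos (by positivity)]
            field_simp
          have hmin : c₀ ≤ quad d (A u) := hv₀min hu
          have hvu : v = ‖v‖ • u := by
            rw [hudef, smul_smul, mul_inv_cancel₀ hnv.ne', one_smul]
          calc c₀ * ‖v‖ ^ 2 ≤ quad d (A u) * ‖v‖ ^ 2 :=
                mul_le_mul_of_nonneg_right hmin (by positivity)
            _ = quad d (‖v‖ • A u) := by rw [aux_quad_smul]; ring
            _ = quad d (A v) := by rw [← map_smul, ← hvu]
      set ε := min 1 (c₀ / (2 * (2 * M + 1))) with hεdef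
      have hεpos : 0 < ε := lt_min one_pos (by positivity)
      have hε1 : ε ≤ 1 := min_le_left _ _
      have hεM : (2 * M + 1) * ε ≤ c₀ / 2 := by
        have h2 : ε ≤ c₀ / (2 * (2 * M + 1)) := min_le_right _ _
        have h3 : (0:ℝ) < 2 * M + 1 := by positivity
        calc (2 * M + 1) * ε ≤ (2 * M + 1) * (c₀ / (2 * (2 * M + 1))) :=
              mul_le_mul_of_nonneg_left h2 (by positivity)
          _ = c₀ / 2 := by field_simp
      have hcontA : ContinuousAt (fderiv ℝ i) (p₀ : EuclideanSpace ℝ (Fin d)) :=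
        (hC1.continuousOn_fderiv_of_isOpen hUopen le_rfl).continuousAt
          (hUopen.mem_nhds p₀.2)
      obtain ⟨δ, hδpos, hδ⟩ := Metric.continuousAt_iff.1 hcontA ε hεpos
      obtain ⟨r₀, hr₀pos, hball₀⟩ := Metric.isOpen_iff.1 hUopen _ p₀.2
      set r := min δ r₀ with hrdef
      have hrpos : 0 < r := lt_min hδpos hr₀pos
      set s := ball (p₀ : EuclideanSpace ℝ (Fin d)) r with hsdef
      have hsU : s ⊆ U := fun x hx =>
        hball₀ (mem_ball.2 (lt_of_lt_of_le (mem_ball.1 hx) (min_le_right _ _)))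
      have hsderiv : ∀ x ∈ s, ‖fderiv ℝ i x - A‖ ≤ ε := by
        intro x hx
        have : dist x (p₀ : EuclideanSpace ℝ (Fin d)) < δ :=
          lt_of_lt_of_le (mem_ball.1 hx) (min_le_left _ _)
        have := hδ this
        rw [dist_eq_norm] at this
        exact this.le
      have hhas : ∀ x ∈ s, HasFDerivWithinAt i (fderiv ℝ i x) s x := fun x hx =>
        (((hC1.contDiffAt (hUopen.mem_nhds (hsU hx))).differentiableAt
          one_ne_zero).hasFDerivAt).hasFDerivWithinAt
      have hmv : ∀ x ∈ s, ∀ y ∈ s, ‖i y - i x - A (y - x)‖ ≤ ε * ‖y - x‖ := fun x hx y hy =>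
        (convex_ball _ _).norm_image_sub_le_of_norm_hasFDerivWithin_le' hhas hsderiv hx hy
      refine ⟨Subtype.val ⁻¹' s, ?_, c₀ / 4, by positivity, ?_⟩
      · exact continuous_subtype_val.continuousAt.preimage_mem_nhds
          (Metric.ball_mem_nhds _ hrpos)
      · intro p' hp' p'' hp''
        set x := (p'' : EuclideanSpace ℝ (Fin d)) with hxdef
        set y := (p' : EuclideanSpace ℝ (Fin d)) with hydef
        set w := y - x with hwdef
        set R := i y - i x - A w with hRdef
        have hR : ‖R‖ ≤ ε * ‖w‖ := hmv x hp'' y hp'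
        have hAw : ‖A w‖ ≤ M * ‖w‖ := A.le_opNorm w
        have hqAw : c₀ * ‖w‖ ^ 2 ≤ quad d (A w) := hcoer w
        have hbilAR : |bil d (A w) R| ≤ ‖A w‖ * ‖R‖ := aux_abs_bil_le d _ _
        have hqR : |quad d R| ≤ ‖R‖ * ‖R‖ := aux_abs_bil_le d R R
        have hiyix : i y - i x = A w + R := by rw [hRdef]; abel
        have hw0 : (0:ℝ) ≤ ‖w‖ := norm_nonneg _
        have hR0 : (0:ℝ) ≤ ‖R‖ := norm_nonneg _
        have h1 : -(‖A w‖ * ‖R‖) ≤ bil d (A w) R := neg_le_of_abs_le hbilAR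
        have h2 : -(‖R‖ * ‖R‖) ≤ quad d R := neg_le_of_abs_le hqR
        have hquad : c₀ / 2 * ‖w‖ ^ 2 ≤ quad d (i y - i x) := by
          rw [hiyix, aux_quad_add]
          nlinarith [mul_le_mul hAw hR (norm_nonneg R) (by positivity : (0:ℝ) ≤ M * ‖w‖),
            mul_le_mul hR hR hR0 (by positivity : (0:ℝ) ≤ ε * ‖w‖),
            mul_le_mul_of_nonneg_right hεM (sq_nonneg ‖w‖), sq_nonneg ‖w‖,
            mul_le_mul_of_nonneg_right hε1 (mul_nonneg hεpos.le (sq_nonneg ‖w‖))]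
        have hqs := aux_quad_sub d (i y) (i x)
        rw [hAdS y (hsU hp'), hAdS x (hsU hp'')] at hqs
        have hdisteq : dist p' p'' = ‖w‖ := by
          rw [Subtype.dist_eq, dist_eq_norm]
        rw [hdisteq]
        nlinarith [hquad]
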